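/- The configuration A ∠i B (same position), B ∠_k^l C, A ∠_s^t C is realizable by o-points if and only if l = t and turn_m(i, k, -s) holds. -/

import Mathlib

open Real Complex

/-- The OPRA_m sector `[i]_m` as a subset of the circle `ℝ/2πℤ` (`Real.Angle`):
an open arc if `i` is odd, a single point if `i` is even. -/
noncomputable def sector (m : ℕ) (i : ZMod (4*m)) : Set Real.Angle :=
  if Odd i.val then
    (fun r : ℝ => (r : Real.Angle)) ''
      Set.Ioo (2*π*((i.val : ℝ)-1)/(4*m)) (2*π*((i.val : ℝ)+1)/(4*m))
  else {((2*π*(i.val : ℝ)/(4*m) : ℝ) : Real.Angle)}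

/-- The direction angle `φ_XY` of the vector `Y - X`, as an element of the circle. -/
noncomputable def phiAngle (X Y : ℂ) : Real.Angle := (Complex.arg (Y - X) : Real.Angle)

/-- An o-point: a point of the plane (modeled as `ℂ`) with an orientation. -/
abbrev OPoint := ℂ × Real.Angle

/-- The distinct-position OPRA_m base relation `A ∠_i^j B`. -/
noncomputable def oprarel (m : ℕ) (i j : ZMod (4*m)) (A B : OPoint) : Prop :=
  A.1 ≠ B.1 ∧ phiAngle A.1 B.1 - A.2 ∈ sector m i ∧ phiAngle B.1 A.1 - B.2 ∈ sector m j

/-- The same-position OPRA_m base relation `A ∠i B`. -/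
noncomputable def oprasame (m : ℕ) (i : ZMod (4*m)) (A B : OPoint) : Prop :=
  A.1 = B.1 ∧ B.2 - A.2 ∈ sector m i

/-- `turn_m(i,j,k)`. -/
def turnRel (m : ℕ) (i j k : ZMod (4*m)) : Prop :=
  if Odd i.val ∧ Odd j.val then i + j + k = 0 ∨ i + j + k = 1 ∨ i + j + k = -1
  else i + j + k = 0

/-- `sign_m(i)`. -/
def signm (m : ℕ) (i : ZMod (4*m)) : ℤ :=
  if i.val = 0 ∨ i.val = 2*m then 0 else if i.val < 2*m then 1 else -1

/-- `triangle_m(i,j,k)`. -/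
def triRel (m : ℕ) (i j k : ZMod (4*m)) : Prop :=
  turnRel m i j (k - ((2*m : ℕ) : ZMod (4*m))) ∧
  ¬(i = ((2*m : ℕ) : ZMod (4*m)) ∧ j = ((2*m : ℕ) : ZMod (4*m)) ∧ k = ((2*m : ℕ) : ZMod (4*m))) ∧
  signm m i = signm m j ∧ signm m j = signm m k

/-- The sign of an angle, where both `0` and `π` get sign `0`. -/
noncomputable def angsign (θ : Real.Angle) : ℤ := by
  classical exact if θ.toReal = 0 ∨ θ.toReal = π then 0 else if 0 < θ.toReal then 1 else -1

namespace S15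

noncomputable def u (m : ℕ) : ℝ := 2*π/(4*(m:ℝ))

lemma u_pos {m : ℕ} (hm : 1 ≤ m) : 0 < u m := by
  have h : (0:ℝ) < 4*(m:ℝ) := by
    have : (1:ℝ) ≤ (m:ℝ) := by exact_mod_cast hm
    linarith
  exact div_pos (by positivity) h

lemma two_pi_eq {m : ℕ} (hm : 1 ≤ m) : 2*π = u m * (4*(m:ℝ)) := by
  have h : (4:ℝ)*(m:ℝ) ≠ 0 := by
    have : (1:ℝ) ≤ (m:ℝ) := by exact_mod_cast hm
    positivity
  field_simp [u]
  unfold u; field_simp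

lemma mem_sector_iff {m : ℕ} (hm : 1 ≤ m) (i : ZMod (4*m)) (θ : Real.Angle) :
    θ ∈ sector m i ↔ ∃ ε : ℝ, θ = ((u m * i.val + ε : ℝ) : Real.Angle)
      ∧ (if Odd i.val then |ε| < u m else ε = 0) := by
  unfold sector
  by_cases h : Odd i.val
  · simp only [h, if_true]
    constructor
    · rintro ⟨r, ⟨hr1, hr2⟩, rfl⟩
      refine ⟨r - u m * i.val, by rw [show u m * (i.val:ℝ) + (r - u m * i.val) = r from by ring], ?_⟩
      have e1 : 2*π*((i.val : ℝ)-1)/(4*m) = u m * i.val - u m := by unfold u; ring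
      have e2 : 2*π*((i.val : ℝ)+1)/(4*m) = u m * i.val + u m := by unfold u; ring
      rw [abs_sub_lt_iff]
      constructor <;> [linarith [e2 ▸ hr2]; linarith [e1 ▸ hr1]]
    · rintro ⟨ε, rfl, hε⟩
      refine ⟨u m * i.val + ε, ⟨?_, ?_⟩, rfl⟩
      · have e1 : 2*π*((i.val : ℝ)-1)/(4*m) = u m * i.val - u m := by unfold u; ring
        rw [e1]; have := abs_lt.mp hε; linarith [this.1]
      · have e2 : 2*π*((i.val : ℝ)+1)/(4*m) = u m * i.val + u m := by unfold u; ring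
        rw [e2]; have := abs_lt.mp hε; linarith [this.2]
  · simp only [h, if_false, Set.mem_singleton_iff]
    constructor
    · rintro rfl
      exact ⟨0, by rw [show u m * (i.val:ℝ) + 0 = 2*π*(i.val:ℝ)/(4*(m:ℝ)) from by unfold u; ring], rfl⟩
    · rintro ⟨ε, rfl, rfl⟩
      rw [show u m * (i.val:ℝ) + 0 = 2*π*(i.val:ℝ)/(4*(m:ℝ)) from by unfold u; ring]

lemma center_mem {m : ℕ} (hm : 1 ≤ m) (i : ZMod (4*m)) :
    ((u m * i.val : ℝ) : Real.Angle) ∈ sector m i := by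
  rw [mem_sector_iff hm]
  refine ⟨0, by norm_num, ?_⟩
  split
  · simpa using u_pos hm
  · rfl

lemma int_abs_lt {m : ℕ} (hm : 1 ≤ m) {D : ℤ} {c : ℕ}
    (h : u m * |(D:ℝ)| < c * u m) : |D| < c := by
  have hupos := u_pos hm
  have h1 : |(D:ℝ)| < c := by nlinarith [abs_nonneg (D:ℝ)]
  exact_mod_cast (by push_cast; exact h1 : ((|D| : ℤ) : ℝ) < (c:ℕ))

lemma zmod_of_dvd {m : ℕ} [NeZero (4*m)] {a b : ℤ} (hdvd : ((4*m:ℕ):ℤ) ∣ (a - b)) :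
    ((a:ℤ) : ZMod (4*m)) = ((b:ℤ) : ZMod (4*m)) := by
  have h := (ZMod.intCast_zmod_eq_zero_iff_dvd (a-b) (4*m)).mpr hdvd
  push_cast at h
  exact sub_eq_zero.mp h

lemma val_natCast' {m : ℕ} [NeZero (4*m)] (i : ZMod (4*m)) :
    ((i.val : ℕ) : ZMod (4*m)) = i := by
  rw [ZMod.natCast_val, ZMod.cast_id]

lemma neg_mem {m : ℕ} (hm : 1 ≤ m) {i : ZMod (4*m)} {θ : Real.Angle}
    (h : θ ∈ sector m i) : -θ ∈ sector m (-i) := by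
  haveI : NeZero (4*m) := ⟨by omega⟩
  rw [mem_sector_iff hm] at h ⊢
  obtain ⟨ε, rfl, hε⟩ := h
  refine ⟨-ε, ?_, ?_⟩
  · rw [← Real.Angle.coe_neg, Real.Angle.angle_eq_iff_two_pi_dvd_sub]
    by_cases h0 : i = 0
    · refine ⟨0, ?_⟩
      subst h0
      simp
    · rw [ZMod.neg_val, if_neg h0]
      refine ⟨-1, ?_⟩
      have hle : i.val ≤ 4*m := (ZMod.val_lt i).le
      rw [Nat.cast_sub hle]
      push_cast
      rw [two_pi_eq hm]
      ring
  · by_cases h0 : i = 0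
    · subst h0
      simpa using hε
    · rw [ZMod.neg_val, if_neg h0]
      have hlt : i.val < 4*m := ZMod.val_lt i
      have hne : i.val ≠ 0 := by simpa [ZMod.val_eq_zero] using h0
      split at hε <;> split <;> rename_i hA hB
      · simpa using hε
      · exfalso
        rw [Nat.odd_iff] at hA
        rw [Nat.not_odd_iff_even, Nat.even_iff] at hB
        omega
      · exfalso
        rw [Nat.not_odd_iff_even, Nat.even_iff] at hA
        rw [Nat.odd_iff] at hB
        omega
      · simp [hε]

lemma sector_eq {m : ℕ} (hm : 1 ≤ m) {i j : ZMod (4*m)} {θ : Real.Angle}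
    (hi : θ ∈ sector m i) (hj : θ ∈ sector m j) : i = j := by
  haveI : NeZero (4*m) := ⟨by omega⟩
  rw [mem_sector_iff hm] at hi hj
  obtain ⟨ε, rfl, hε⟩ := hi
  obtain ⟨ε', he, hε'⟩ := hj
  rw [Real.Angle.angle_eq_iff_two_pi_dvd_sub] at he
  obtain ⟨N, hN⟩ := he
  have hupos := u_pos hm
  set D : ℤ := (i.val:ℤ) - (j.val:ℤ) - (4*m:ℕ)*N with hDdef
  have hD : u m * (D:ℝ) = ε' - ε := by
    rw [two_pi_eq hm] at hN
    have : (D:ℝ) = (i.val:ℝ) - (j.val:ℝ) - 4*(m:ℝ)*N := by push_cast [hDdef]; ring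
    rw [this]
    nlinarith [hN]
  have habs : u m * |(D:ℝ)| = |ε' - ε| := by
    rw [← abs_of_pos hupos, ← abs_mul, hD]
  have hzero : D = 0 := by
    rcases Nat.even_or_odd i.val with hpi | hpi <;> rcases Nat.even_or_odd j.val with hpj | hpj
    · rw [if_neg (by simpa [Nat.not_odd_iff_even] using hpi)] at hε
      rw [if_neg (by simpa [Nat.not_odd_iff_even] using hpj)] at hε'
      have h0 : u m * (D:ℝ) = 0 := by rw [hD, hε, hε']; ring
      have : (D:ℝ) = 0 := by
        rcases mul_eq_zero.mp h0 with h | h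
        · linarith
        · exact h
      exact_mod_cast this
    · rw [if_neg (by simpa [Nat.not_odd_iff_even] using hpi)] at hε
      rw [if_pos hpj] at hε'
      have hb : |D| < 1 := int_abs_lt hm (by rw [habs, hε]; simpa using hε')
      have h1 := abs_lt.mp hb
      omega
    · rw [if_pos hpi] at hε
      rw [if_neg (by simpa [Nat.not_odd_iff_even] using hpj)] at hε'
      have hb : |D| < 1 := int_abs_lt hm
        (by rw [habs, hε']; simpa [abs_sub_comm] using hε)
      have h1 := abs_lt.mp hb
      omega
    · rw [if_pos hpi] at hε
      rw [if_pos hpj] at hε'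
      have hb : |D| < 2 := int_abs_lt hm (by
        rw [habs]
        calc |ε' - ε| ≤ |ε'| + |ε| := abs_sub _ _
          _ < 2 * u m := by push_cast; linarith)
      rw [Nat.odd_iff] at hpi hpj
      have h1 := abs_lt.mp hb
      have h2 : (2:ℤ) ∣ ((4*m:ℕ):ℤ)*N := ⟨2*m*N, by push_cast; ring⟩
      omega
  have hsub : (i:ZMod (4*m)) - j = 0 := by
    have h2 : ((((i.val:ℤ) - (j.val:ℤ)) : ℤ) : ZMod (4*m)) = ((D : ℤ) : ZMod (4*m)) :=
      zmod_of_dvd ⟨N, by rw [hDdef]; ring⟩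
    rw [hzero] at h2
    push_cast at h2
    rw [val_natCast', val_natCast'] at h2
    simpa using h2
  exact sub_eq_zero.mp hsub

lemma sum_cast {m : ℕ} [NeZero (4*m)] (i j k : ZMod (4*m)) :
    (((i.val : ℤ) + j.val + k.val : ℤ) : ZMod (4*m)) = i + j + k := by
  push_cast
  rw [val_natCast', val_natCast', val_natCast']

lemma construct {m : ℕ} (hm : 1 ≤ m) (i j k : ZMod (4*m)) (c : ℤ)
    (hc : i + j + k = ((c:ℤ) : ZMod (4*m))) (e1 e2 : ℝ)
    (h1 : if Odd i.val then |e1| < u m else e1 = 0)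
    (h2 : if Odd j.val then |e2| < u m else e2 = 0)
    (hsum : e1 + e2 = -(c:ℝ) * u m) :
    ∃ α β γ : Real.Angle, α ∈ sector m i ∧ β ∈ sector m j ∧ γ ∈ sector m k
      ∧ α + β + γ = 0 := by
  haveI : NeZero (4*m) := ⟨by omega⟩
  have hdvd : ((4*m:ℕ):ℤ) ∣ ((i.val:ℤ) + j.val + k.val - c) := by
    rw [← ZMod.intCast_zmod_eq_zero_iff_dvd]
    push_cast
    rw [val_natCast', val_natCast', val_natCast']
    rw [show ((i:ZMod (4*m)) + j + k - c) = (i + j + k) - ((c:ℤ) : ZMod (4*m)) from by push_cast; ring,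
      hc, sub_self]
  obtain ⟨q, hq⟩ := hdvd
  have hqR : (i.val:ℝ) + j.val + k.val - c = 4*(m:ℝ)*q := by
    have := congrArg (fun z : ℤ => (z : ℝ)) hq
    push_cast at this
    linarith [this]
  refine ⟨((u m * i.val + e1 : ℝ) : Real.Angle), ((u m * j.val + e2 : ℝ) : Real.Angle),
    ((u m * k.val + 0 : ℝ) : Real.Angle),
    (mem_sector_iff hm i _).2 ⟨e1, rfl, h1⟩,
    (mem_sector_iff hm j _).2 ⟨e2, rfl, h2⟩,
    (mem_sector_iff hm k _).2 ⟨0, rfl, by split <;> simp [u_pos hm]⟩, ?_⟩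
  rw [← Real.Angle.coe_add, ← Real.Angle.coe_add,
    show (0 : Real.Angle) = ((0:ℝ) : Real.Angle) from rfl,
    Real.Angle.angle_eq_iff_two_pi_dvd_sub]
  refine ⟨q, ?_⟩
  have hpi := two_pi_eq hm
  linear_combination (u m) * hqR + hsum - (q:ℝ) * hpi

lemma turn_iff {m : ℕ} (hm : 1 ≤ m) (i j k : ZMod (4*m)) :
    (∃ α β γ : Real.Angle, α ∈ sector m i ∧ β ∈ sector m j ∧ γ ∈ sector m k
      ∧ α + β + γ = 0) ↔ turnRel m i j k := by
  haveI : NeZero (4*m) := ⟨by omega⟩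
  have hupos := u_pos hm
  constructor
  · rintro ⟨α, β, γ, hα, hβ, hγ, hsum⟩
    rw [mem_sector_iff hm] at hα hβ hγ
    obtain ⟨ε1, rfl, h1⟩ := hα
    obtain ⟨ε2, rfl, h2⟩ := hβ
    obtain ⟨ε3, rfl, h3⟩ := hγ
    rw [← Real.Angle.coe_add, ← Real.Angle.coe_add,
      show (0 : Real.Angle) = ((0:ℝ) : Real.Angle) from rfl,
      Real.Angle.angle_eq_iff_two_pi_dvd_sub] at hsum
    obtain ⟨N, hN⟩ := hsum
    set D : ℤ := (i.val:ℤ) + j.val + k.val - (4*m:ℕ)*N with hDdef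
    have hD : u m * (D:ℝ) = -(ε1 + ε2 + ε3) := by
      rw [two_pi_eq hm] at hN
      have hcast : (D:ℝ) = (i.val:ℝ) + j.val + k.val - 4*(m:ℝ)*N := by push_cast [hDdef]; ring
      rw [hcast]
      nlinarith [hN]
    have habs : u m * |(D:ℝ)| = |ε1 + ε2 + ε3| := by
      rw [← abs_of_pos hupos, ← abs_mul, hD, abs_neg]
    have hcastD : i + j + k = ((D:ℤ) : ZMod (4*m)) := by
      rw [← sum_cast i j k]
      exact (zmod_of_dvd ⟨-N, by rw [hDdef]; push_cast; ring⟩).symm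
    have hb1 : ∀ {v : ℕ} {ε : ℝ}, (if Odd v then |ε| < u m else ε = 0) → |ε| < u m := by
      intro v ε h
      split at h
      · exact h
      · simpa [h] using hupos
    have hNe : (2:ℤ) ∣ ((4*m:ℕ):ℤ)*N := ⟨2*m*N, by push_cast; ring⟩
    unfold turnRel
    by_cases hij : Odd i.val ∧ Odd j.val
    · rw [if_pos hij]
      rcases Nat.even_or_odd k.val with hpk | hpk
      · rw [if_neg (by simpa [Nat.not_odd_iff_even] using hpk)] at h3
        have hb : |D| < 2 := int_abs_lt hm (by
          rw [habs, h3]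
          calc |ε1 + ε2 + 0| = |ε1 + ε2| := by rw [add_zero]
            _ ≤ |ε1| + |ε2| := abs_add_le _ _
            _ < 2 * u m := by push_cast; linarith [hb1 h1, hb1 h2])
        have hD0 : D = 0 := by
          have hh := abs_lt.mp hb
          obtain ⟨hi', hj'⟩ := hij
          rw [Nat.odd_iff] at hi' hj'
          rw [Nat.even_iff] at hpk
          omega
        left
        rw [hcastD, hD0]
        norm_num
      · rw [if_pos hpk] at h3
        have hb : |D| < 3 := int_abs_lt hm (by
          rw [habs]
          calc |ε1 + ε2 + ε3| ≤ |ε1 + ε2| + |ε3| := abs_add_le _ _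
            _ ≤ |ε1| + |ε2| + |ε3| := by linarith [abs_add_le ε1 ε2]
            _ < 3 * u m := by push_cast; linarith [hb1 h1, hb1 h2])
        have hD0 : D = 0 ∨ D = 1 ∨ D = -1 := by
          have hh := abs_lt.mp hb
          obtain ⟨hi', hj'⟩ := hij
          rw [Nat.odd_iff] at hi' hj'
          rw [Nat.odd_iff] at hpk
          omega
        rcases hD0 with h | h | h
        · left; rw [hcastD, h]; norm_num
        · right; left; rw [hcastD, h]; norm_num
        · right; right; rw [hcastD, h]; norm_num
    · rw [if_neg hij]
      have hD0 : D = 0 := by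
        rcases Nat.even_or_odd i.val with hpi | hpi <;>
          rcases Nat.even_or_odd j.val with hpj | hpj <;>
          rcases Nat.even_or_odd k.val with hpk | hpk
        -- eee
        · rw [if_neg (by simpa [Nat.not_odd_iff_even] using hpi)] at h1
          rw [if_neg (by simpa [Nat.not_odd_iff_even] using hpj)] at h2
          rw [if_neg (by simpa [Nat.not_odd_iff_even] using hpk)] at h3
          have h0 : u m * (D:ℝ) = 0 := by rw [hD, h1, h2, h3]; ring
          have : (D:ℝ) = 0 := by
            rcases mul_eq_zero.mp h0 with h | h
            · linarith
            · exact h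
          exact_mod_cast this
        -- eeo
        · rw [if_neg (by simpa [Nat.not_odd_iff_even] using hpi)] at h1
          rw [if_neg (by simpa [Nat.not_odd_iff_even] using hpj)] at h2
          rw [if_pos hpk] at h3
          have hb : |D| < 1 := int_abs_lt hm (by rw [habs, h1, h2]; simpa using h3)
          have hh := abs_lt.mp hb
          omega
        -- eoe
        · rw [if_neg (by simpa [Nat.not_odd_iff_even] using hpi)] at h1
          rw [if_pos hpj] at h2
          rw [if_neg (by simpa [Nat.not_odd_iff_even] using hpk)] at h3
          have hb : |D| < 1 := int_abs_lt hm (by rw [habs, h1, h3]; simpa using h2)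
          have hh := abs_lt.mp hb
          omega
        -- eoo
        · rw [if_neg (by simpa [Nat.not_odd_iff_even] using hpi)] at h1
          rw [if_pos hpj] at h2
          rw [if_pos hpk] at h3
          have hb : |D| < 2 := int_abs_lt hm (by
            rw [habs, h1]
            calc |0 + ε2 + ε3| = |ε2 + ε3| := by rw [zero_add]
              _ ≤ |ε2| + |ε3| := abs_add_le _ _
              _ < 2 * u m := by push_cast; linarith)
          have hh := abs_lt.mp hb
          rw [Nat.even_iff] at hpi
          rw [Nat.odd_iff] at hpj hpk
          omega
        -- oee
        · rw [if_pos hpi] at h1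
          rw [if_neg (by simpa [Nat.not_odd_iff_even] using hpj)] at h2
          rw [if_neg (by simpa [Nat.not_odd_iff_even] using hpk)] at h3
          have hb : |D| < 1 := int_abs_lt hm (by rw [habs, h2, h3]; simpa using h1)
          have hh := abs_lt.mp hb
          omega
        -- oeo
        · rw [if_pos hpi] at h1
          rw [if_neg (by simpa [Nat.not_odd_iff_even] using hpj)] at h2
          rw [if_pos hpk] at h3
          have hb : |D| < 2 := int_abs_lt hm (by
            rw [habs, h2]
            calc |ε1 + 0 + ε3| = |ε1 + ε3| := by rw [add_zero]
              _ ≤ |ε1| + |ε3| := abs_add_le _ _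
              _ < 2 * u m := by push_cast; linarith)
          have hh := abs_lt.mp hb
          rw [Nat.even_iff] at hpj
          rw [Nat.odd_iff] at hpi hpk
          omega
        -- ooe / ooo: contradiction
        · exact absurd ⟨hpi, hpj⟩ hij
        · exact absurd ⟨hpi, hpj⟩ hij
      rw [hcastD, hD0]
      norm_num
  · intro ht
    unfold turnRel at ht
    have hz : ∀ {v : ℕ}, ¬ Odd v → ∀ e : ℝ, e = 0 → (if Odd v then |e| < u m else e = 0) := by
      intro v hv e he
      rw [if_neg hv]
      exact he
    by_cases hij : Odd i.val ∧ Odd j.val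
    · rw [if_pos hij] at ht
      have ho1 : ∀ e : ℝ, |e| < u m → (if Odd i.val then |e| < u m else e = 0) := by
        intro e he; rw [if_pos hij.1]; exact he
      have ho2 : ∀ e : ℝ, |e| < u m → (if Odd j.val then |e| < u m else e = 0) := by
        intro e he; rw [if_pos hij.2]; exact he
      have hhalf : |(u m)/2| < u m := by
        rw [abs_of_pos (by linarith : (0:ℝ) < u m / 2)]
        linarith
      have hnhalf : |-(u m)/2| < u m := by
        rw [show -(u m)/2 = -((u m)/2) from by ring, abs_neg]
        exact hhalf
      rcases ht with h | h | h
      · exact construct hm i j k 0 (by rw [h]; norm_num) 0 0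
          (by split <;> simp [u_pos hm]) (by split <;> simp [u_pos hm]) (by norm_num)
      · exact construct hm i j k 1 (by rw [h]; norm_num) (-(u m)/2) (-(u m)/2)
          (ho1 _ hnhalf) (ho2 _ hnhalf) (by push_cast; ring)
      · exact construct hm i j k (-1) (by rw [h]; norm_num) ((u m)/2) ((u m)/2)
          (ho1 _ hhalf) (ho2 _ hhalf) (by push_cast; ring)
    · rw [if_neg hij] at ht
      exact construct hm i j k 0 (by rw [ht]; norm_num) 0 0
        (by split <;> simp [u_pos hm]) (by split <;> simp [u_pos hm]) (by norm_num)

end S15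


theorem stmt15 (m : ℕ) (hm : 1 ≤ m) (i k l s t : ZMod (4*m)) :
    (∃ A B C : OPoint, oprasame m i A B ∧ oprarel m k l B C ∧ oprarel m s t A C) ↔
      (l = t ∧ turnRel m i k (-s)) := by
  constructor
  · rintro ⟨A, B, C, ⟨hAB, hi⟩, ⟨hBC, hk, hl⟩, ⟨hAC, hs, ht⟩⟩
    rw [hAB] at hs ht
    refine ⟨S15.sector_eq hm hl ht, ?_⟩
    rw [← S15.turn_iff hm]
    exact ⟨B.2 - A.2, phiAngle B.1 C.1 - B.2, -(phiAngle B.1 C.1 - A.2),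
      hi, hk, S15.neg_mem hm hs, by abel⟩
  · rintro ⟨rfl, hturn⟩
    obtain ⟨α, β, γ, hα, hβ, hγ, hsum⟩ := (S15.turn_iff hm i k (-s)).2 hturn
    have hp1 : phiAngle 0 1 = 0 := by simp [phiAngle]
    have hp2 : phiAngle 1 0 = ((π : ℝ) : Real.Angle) := by
      rw [phiAngle, zero_sub, Complex.arg_neg_one]
    refine ⟨(0, -β - α), (0, -β), (1, ((π : ℝ) : Real.Angle) - ((S15.u m * l.val : ℝ) : Real.Angle)),
      ⟨rfl, ?_⟩, ⟨?_, ?_, ?_⟩, ⟨?_, ?_, ?_⟩⟩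
    · show (-β) - (-β - α) ∈ sector m i
      rw [show (-β) - (-β - α) = α from by abel]
      exact hα
    · exact fun h => zero_ne_one (α := ℂ) h
    · show phiAngle 0 1 - (-β) ∈ sector m k
      rw [hp1, show (0 : Real.Angle) - (-β) = β from by abel]
      exact hβ
    · show phiAngle 1 0 - _ ∈ sector m l
      rw [hp2, sub_sub_cancel]
      exact S15.center_mem hm l
    · exact fun h => zero_ne_one (α := ℂ) h
    · show phiAngle 0 1 - (-β - α) ∈ sector m s
      have hg : β + α = -γ := by
        rw [eq_neg_iff_add_eq_zero, ← hsum]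
        abel
      rw [hp1, show (0 : Real.Angle) - (-β - α) = β + α from by abel, hg]
      have := S15.neg_mem hm hγ
      rwa [neg_neg] at this
    · show phiAngle 1 0 - _ ∈ sector m l
      rw [hp2, sub_sub_cancel]
      exact S15.center_mem hm l
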